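/- Let k be a field, R = k[[x]] the formal power series ring, I = (x²)R, M = (x)R/(x⁴)R, and N = (x)R/(x²)R. Then 𝓛_I(N) = 1, 𝓛_I(M) = 2, and 𝓛_I(M ⊕ N) = 2. In particular, I-quasilength is not additive on direct sums: 𝓛_I(M ⊕ N) ≠ 𝓛_I(M) + 𝓛_I(N). -/

import Mathlib

open scoped BigOperators ENNReal

universe u v

/-- A filtration of `M` of length `h` whose factors are cyclic modules killed by `J`. -/
def HasQLFiltration (S : Type u) [CommRing S] (J : Ideal S)
    (M : Type v) [AddCommGroup M] [Module S M] (h : ℕ) : Prop :=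
  ∃ c : Fin (h + 1) → Submodule S M,
    Monotone c ∧ c 0 = ⊥ ∧ c (Fin.last h) = ⊤ ∧
    ∀ i : Fin h,
      (∃ m : M, c i.succ = c i.castSucc ⊔ Submodule.span S {m}) ∧
      ∀ a ∈ J, ∀ x ∈ c i.succ, a • x ∈ c i.castSucc

/-- The `J`-quasilength of `M`. -/
noncomputable def quasilength (S : Type u) [CommRing S] (J : Ideal S)
    (M : Type v) [AddCommGroup M] [Module S M] : ℕ∞ :=
  sInf {n : ℕ∞ | ∃ h : ℕ, n = (h : ℕ∞) ∧ HasQLFiltration S J M h}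

variable (k : Type u) [Field k]

/-- The ideal `(x) ⊆ k[[x]]`. -/
noncomputable abbrev psIdealX : Ideal (PowerSeries k) := Ideal.span {PowerSeries.X}

/-- The module `(x)/(x⁴)` over `k[[x]]`. -/
abbrev psModM :=
  ↥(psIdealX k) ⧸
    Submodule.comap (psIdealX k).subtype
      (Ideal.span {PowerSeries.X ^ 4} : Ideal (PowerSeries k))

/-- The module `(x)/(x²)` over `k[[x]]`. -/
abbrev psModN :=
  ↥(psIdealX k) ⧸
    Submodule.comap (psIdealX k).subtype
      (Ideal.span {PowerSeries.X ^ 2} : Ideal (PowerSeries k))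

namespace QLAux

section Generic

variable {S : Type u} [CommRing S] {J : Ideal S}
  {M : Type v} [AddCommGroup M] [Module S M]

lemma quasilength_eq (h₀ : ℕ) (hmem : HasQLFiltration S J M h₀)
    (hlb : ∀ h, h < h₀ → ¬ HasQLFiltration S J M h) :
    quasilength S J M = (h₀ : ℕ∞) := by
  refine le_antisymm (sInf_le ⟨h₀, rfl, hmem⟩) (le_sInf ?_)
  rintro n ⟨h, rfl, hh⟩
  exact_mod_cast Nat.not_lt.1 fun hlt => hlb h hlt hh

lemma not_QL_zero (x : M) (hx : x ≠ 0) : ¬ HasQLFiltration S J M 0 := by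
  rintro ⟨c, -, h0, htop, -⟩
  rw [show (Fin.last 0) = 0 from rfl, h0] at htop
  have : x ∈ (⊥ : Submodule S M) := htop ▸ Submodule.mem_top
  exact hx (by simpa using this)

lemma not_QL_one {a : S} (ha : a ∈ J) (x : M) (h : a • x ≠ 0) :
    ¬ HasQLFiltration S J M 1 := by
  rintro ⟨c, -, h0, htop, hcond⟩
  have := (hcond 0).2 a ha x (by
    rw [show (0 : Fin 1).succ = Fin.last 1 from rfl, htop]; trivial)
  rw [show (0 : Fin 1).castSucc = 0 from rfl, h0, Submodule.mem_bot] at this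
  exact h this

lemma QL_two (c₁ : Submodule S M)
    (m₁ : M) (hm₁ : c₁ = Submodule.span S {m₁})
    (m₂ : M) (hm₂ : c₁ ⊔ Submodule.span S {m₂} = ⊤)
    (h1 : ∀ a ∈ J, ∀ x ∈ c₁, a • x = 0)
    (h2 : ∀ a ∈ J, ∀ x : M, a • x ∈ c₁) :
    HasQLFiltration S J M 2 := by
  refine ⟨![⊥, c₁, ⊤], ?_, rfl, rfl, ?_⟩
  · intro i j hij
    fin_cases i <;> fin_cases j <;> simp_all
  · intro i
    fin_cases i
    · exact ⟨⟨m₁, by simpa using hm₁⟩, fun a ha x hx => by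
        simpa using h1 a ha x (by simpa using hx)⟩
    · exact ⟨⟨m₂, by simpa using hm₂.symm⟩, fun a ha x _ => by simpa using h2 a ha x⟩

lemma QL_one (m : M) (hm : Submodule.span S {m} = ⊤)
    (h : ∀ a ∈ J, ∀ x : M, a • x = 0) :
    HasQLFiltration S J M 1 := by
  refine ⟨![⊥, ⊤], ?_, rfl, rfl, ?_⟩
  · intro i j hij
    fin_cases i <;> fin_cases j <;> simp_all
  · intro i
    fin_cases i
    exact ⟨⟨m, by simpa using hm.symm⟩, fun a ha x _ => by simpa using h a ha x⟩

end Generic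

open PowerSeries

variable {k}

noncomputable def el (e : ℕ) (f : PowerSeries k) :
    ↥(psIdealX k) ⧸ Submodule.comap (psIdealX k).subtype
      (Ideal.span {(PowerSeries.X : PowerSeries k) ^ e}) :=
  Submodule.Quotient.mk ⟨f * X, Ideal.mem_span_singleton.2 ⟨f, (mul_comm f X)⟩⟩

lemma smul_el (e : ℕ) (g f : PowerSeries k) : g • el e f = el (k := k) e (g * f) := by
  show Submodule.Quotient.mk _ = Submodule.Quotient.mk _
  congr 1
  ext
  simp [mul_assoc]

lemma el_add (e : ℕ) (f g : PowerSeries k) : el e f + el e g = el (k := k) e (f + g) := by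
  show Submodule.Quotient.mk _ = Submodule.Quotient.mk _
  congr 1
  ext
  simp [add_mul]

lemma el_congr (e : ℕ) {f g : PowerSeries k} (h : f = g) : el (k := k) e f = el e g := by
  rw [h]

lemma el_surj (e : ℕ) (y : ↥(psIdealX k) ⧸ Submodule.comap (psIdealX k).subtype
      (Ideal.span {(PowerSeries.X : PowerSeries k) ^ e})) : ∃ f, y = el e f := by
  obtain ⟨⟨m, hm⟩, rfl⟩ := Submodule.Quotient.mk_surjective _ y
  obtain ⟨f, hf⟩ := Ideal.mem_span_singleton.1 hm
  exact ⟨f, by simp only [el]; congr 1; ext; simp [hf, mul_comm]⟩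

lemma el_eq_zero (e : ℕ) (f : PowerSeries k) (h : (X : PowerSeries k) ^ e ∣ f * X) :
    el (k := k) e f = 0 := by
  rw [el, Submodule.Quotient.mk_eq_zero]
  simpa [Submodule.mem_comap, Ideal.mem_span_singleton] using h

lemma el_ne_zero (e : ℕ) (f : PowerSeries k) (h : ¬ (X : PowerSeries k) ^ e ∣ f * X) :
    el (k := k) e f ≠ 0 := by
  rw [el, Ne, Submodule.Quotient.mk_eq_zero]
  simpa [Submodule.mem_comap, Ideal.mem_span_singleton] using h

lemma span_el_one (e : ℕ) :
    Submodule.span (PowerSeries k) {el (k := k) e 1} = ⊤ := by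
  rw [eq_top_iff]
  rintro y -
  obtain ⟨f, rfl⟩ := el_surj e y
  rw [show el (k := k) e f = f • el e 1 by rw [smul_el, mul_one]]
  exact Submodule.smul_mem _ _ (Submodule.subset_span rfl)

lemma nd {n m : ℕ} (h : m < n) : ¬ (X : PowerSeries k) ^ n ∣ X ^ m := by
  intro hd
  have := PowerSeries.X_pow_dvd_iff.1 hd m h
  simp [PowerSeries.coeff_X_pow] at this

lemma not_X_pow_two_dvd_X : ¬ (X : PowerSeries k) ^ 2 ∣ (1 : PowerSeries k) * X := by
  intro h
  refine nd (k := k) (n := 2) (m := 1) (by norm_num) ?_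
  rw [pow_one]
  simpa using h

lemma not_X_pow_four_dvd : ¬ (X : PowerSeries k) ^ 4 ∣ (X ^ 2 * 1 : PowerSeries k) * X := by
  intro h
  refine nd (k := k) (n := 4) (m := 3) (by norm_num) ?_
  have e : (X ^ 2 * 1 : PowerSeries k) * X = X ^ 3 := by ring
  rwa [e] at h

lemma not_X_pow_four_dvd' : ¬ (X : PowerSeries k) ^ 4 ∣ (1 : PowerSeries k) * X := by
  intro h
  refine nd (k := k) (n := 4) (m := 1) (by norm_num) ?_
  rw [pow_one]
  simpa using h

lemma X_sq_mem : (X : PowerSeries k) ^ 2 ∈ Ideal.span {(X : PowerSeries k) ^ 2} :=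
  Ideal.subset_span rfl

end QLAux

set_option maxHeartbeats 1000000 in
open QLAux PowerSeries in
theorem quasilength_not_additive :
    quasilength (PowerSeries k) (Ideal.span {PowerSeries.X ^ 2}) (psModN k) = 1 ∧
    quasilength (PowerSeries k) (Ideal.span {PowerSeries.X ^ 2}) (psModM k) = 2 ∧
    quasilength (PowerSeries k) (Ideal.span {PowerSeries.X ^ 2}) (psModM k × psModN k) = 2 ∧
    quasilength (PowerSeries k) (Ideal.span {PowerSeries.X ^ 2}) (psModM k × psModN k) ≠
      quasilength (PowerSeries k) (Ideal.span {PowerSeries.X ^ 2}) (psModM k) +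
      quasilength (PowerSeries k) (Ideal.span {PowerSeries.X ^ 2}) (psModN k) := by
  have hN : quasilength (PowerSeries k) (Ideal.span {PowerSeries.X ^ 2}) (psModN k) = 1 := by
    have := quasilength_eq (S := PowerSeries k) (J := Ideal.span {PowerSeries.X ^ 2})
      (M := psModN k) 1
      (QL_one (el 2 1) (span_el_one 2) ?_) ?_
    · exact_mod_cast this
    · -- kill: every element of N is killed by (X²)
      intro a ha x
      obtain ⟨b, rfl⟩ := Ideal.mem_span_singleton.1 ha
      obtain ⟨f, rfl⟩ := el_surj 2 x
      rw [smul_el]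
      exact el_eq_zero 2 _ ⟨b * f * X, by ring⟩
    · intro h hh
      interval_cases h
      exact not_QL_zero (el 2 1) (el_ne_zero 2 1 not_X_pow_two_dvd_X)
  have hM : quasilength (PowerSeries k) (Ideal.span {PowerSeries.X ^ 2}) (psModM k) = 2 := by
    have := quasilength_eq (S := PowerSeries k) (J := Ideal.span {PowerSeries.X ^ 2})
      (M := psModM k) 2
      (QL_two (Submodule.span _ {el 4 X}) (el 4 X) rfl (el 4 1)
        (by rw [span_el_one 4, sup_top_eq]) ?_ ?_) ?_
    · exact_mod_cast this
    · -- (X²) kills span {el 4 X}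
      intro a ha x hx
      obtain ⟨b, rfl⟩ := Ideal.mem_span_singleton.1 ha
      obtain ⟨c, rfl⟩ := Submodule.mem_span_singleton.1 hx
      rw [smul_smul, smul_el]
      exact el_eq_zero 4 _ ⟨b * c, by ring⟩
    · -- (X²) • M ⊆ span {el 4 X}
      intro a ha x
      obtain ⟨b, rfl⟩ := Ideal.mem_span_singleton.1 ha
      obtain ⟨f, rfl⟩ := el_surj 4 x
      rw [smul_el]
      exact Submodule.mem_span_singleton.2 ⟨X * b * f, by rw [smul_el]; exact el_congr 4 (by ring)⟩
    · intro h hh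
      interval_cases h
      · exact not_QL_zero (el 4 1) (el_ne_zero 4 1 not_X_pow_four_dvd')
      · refine not_QL_one X_sq_mem (el 4 1) ?_
        rw [smul_el]
        exact el_ne_zero 4 _ not_X_pow_four_dvd
  have hP : quasilength (PowerSeries k) (Ideal.span {PowerSeries.X ^ 2})
      (psModM k × psModN k) = 2 := by
    have := quasilength_eq (S := PowerSeries k) (J := Ideal.span {PowerSeries.X ^ 2})
      (M := psModM k × psModN k) 2
      (QL_two (Submodule.span _ {((el 4 X, el 2 1) : psModM k × psModN k)})
        (el 4 X, el 2 1) rfl ((el 4 1, 0)) ?_ ?_ ?_) ?_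
    · exact_mod_cast this
    · -- the two elements generate everything
      rw [eq_top_iff]
      rintro ⟨y₁, y₂⟩ -
      obtain ⟨f, rfl⟩ := el_surj 4 y₁
      obtain ⟨g, rfl⟩ := el_surj 2 y₂
      have key : ((el 4 f, el 2 g) : psModM k × psModN k) =
          g • (el 4 X, el 2 1) + (f - g * X) • (el 4 1, 0) := by
        simp only [Prod.smul_mk, Prod.mk_add_mk, smul_el, smul_zero, add_zero, mul_one]
        refine Prod.ext ?_ ?_
        · rw [el_add]; exact el_congr 4 (by ring)
        · rfl
      rw [key]
      exact Submodule.add_mem _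
        (Submodule.smul_mem _ _ (Submodule.mem_sup_left (Submodule.subset_span rfl)))
        (Submodule.smul_mem _ _ (Submodule.mem_sup_right (Submodule.subset_span rfl)))
    · -- (X²) kills span of the first generator
      intro a ha x hx
      obtain ⟨b, rfl⟩ := Ideal.mem_span_singleton.1 ha
      obtain ⟨c, rfl⟩ := Submodule.mem_span_singleton.1 hx
      rw [smul_smul, Prod.smul_mk, smul_el, smul_el]
      refine Prod.ext ?_ ?_
      · exact el_eq_zero 4 _ ⟨b * c, by ring⟩
      · exact el_eq_zero 2 _ ⟨b * c * X, by ring⟩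
    · -- (X²) • (M × N) ⊆ span of the first generator
      rintro a ha ⟨y₁, y₂⟩
      obtain ⟨b, rfl⟩ := Ideal.mem_span_singleton.1 ha
      obtain ⟨f, rfl⟩ := el_surj 4 y₁
      obtain ⟨g, rfl⟩ := el_surj 2 y₂
      refine Submodule.mem_span_singleton.2 ⟨X * b * f, ?_⟩
      rw [Prod.smul_mk, Prod.smul_mk, smul_el, smul_el, smul_el, smul_el]
      refine Prod.ext ?_ ?_
      · exact el_congr 4 (by ring)
      · show el 2 (X * b * f * 1) = el 2 (X ^ 2 * b * g)
        rw [el_eq_zero 2 (X * b * f * 1) ⟨b * f, by ring⟩,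
            el_eq_zero 2 (X ^ 2 * b * g) ⟨b * g * X, by ring⟩]
    · intro h hh
      interval_cases h
      · refine not_QL_zero ((el 4 1, 0) : psModM k × psModN k) ?_
        simp only [Ne, Prod.ext_iff, not_and]
        intro h1
        exact absurd h1 (el_ne_zero 4 1 not_X_pow_four_dvd')
      · refine not_QL_one X_sq_mem ((el 4 1, 0) : psModM k × psModN k) ?_
        rw [Prod.smul_mk, smul_el]
        simp only [Ne, Prod.ext_iff, not_and]
        intro h1
        exact absurd h1 (el_ne_zero 4 _ not_X_pow_four_dvd)
  refine ⟨hN, hM, hP, ?_⟩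
  rw [hN, hM, hP]
  decide
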